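/- (Core of Corollary 2.) The closed-form adaptive probability beats importance sampling: for every κ ∈ ℝⁿ with κ ≠ 0, nλγ·(∑_{i=1}^n κ_i²) / (∑_{i=1}^n |κ_i|·√(v_i + nλγ))² ≥ nλγ / ∑_{j=1}^n (v_j + nλγ); equivalently θ(κ, p*(κ)) ≥ θ*, where p*(κ)_i = |κ_i|√(v_i + nλγ)/∑_j |κ_j|√(v_j + nλγ). -/

import Mathlib

open scoped BigOperators

/-- core of Corollary 2: The closed-form adaptive probability beats
importance sampling: for every `κ ∈ ℝⁿ` with `κ ≠ 0`,
`nλγ(∑ᵢκᵢ²)/(∑ᵢ|κᵢ|√(vᵢ+nλγ))² ≥ nλγ/∑ⱼ(vⱼ+nλγ)`; equivalently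
`θ(κ,p*(κ)) ≥ θ*` for `p*(κ)ᵢ = |κᵢ|√(vᵢ+nλγ)/∑ⱼ|κⱼ|√(vⱼ+nλγ)`, where
`θ(κ,p) = nλγ(∑_{i∈I}κᵢ²)/(∑_{i∈I}κᵢ²(vᵢ+nλγ)/pᵢ)` and `I = {i : κᵢ ≠ 0}`. -/
theorem stmt16 (n : ℕ) (hn : 1 ≤ n)
    (v : Fin n → ℝ) (hv : ∀ i, 0 ≤ v i)
    (lam gam : ℝ) (hlam : 0 < lam) (hgam : 0 < gam)
    (κ : Fin n → ℝ) (hκ : κ ≠ 0)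
    (θ : (Fin n → ℝ) → ℝ)
    (hθ : ∀ p : Fin n → ℝ, θ p = (n : ℝ) * lam * gam *
        (∑ i ∈ Finset.univ.filter (fun i => κ i ≠ 0), κ i ^ 2) /
        (∑ i ∈ Finset.univ.filter (fun i => κ i ≠ 0),
          κ i ^ 2 * (v i + n * lam * gam) / p i))
    (pstar : Fin n → ℝ)
    (hpstar : ∀ i, pstar i = |κ i| * Real.sqrt (v i + n * lam * gam) /
        ∑ j, |κ j| * Real.sqrt (v j + n * lam * gam))
    (θstar : ℝ) (hθstar : θstar = (n : ℝ) * lam * gam / ∑ j, (v j + n * lam * gam)) :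
    ((n : ℝ) * lam * gam * (∑ i, κ i ^ 2) /
        (∑ i, |κ i| * Real.sqrt (v i + n * lam * gam)) ^ 2 ≥ θstar) ∧
      θ pstar ≥ θstar := by
  set c : ℝ := (n : ℝ) * lam * gam with hc
  have hcpos : 0 < c := by
    have : (0:ℝ) < (n:ℝ) := by exact_mod_cast Nat.lt_of_lt_of_le Nat.zero_lt_one hn
    positivity
  set w : Fin n → ℝ := fun i => v i + n * lam * gam with hw
  have hwpos : ∀ i, 0 < w i := fun i => by
    have := hv i; simp only [hw]; nlinarith
  set S : ℝ := ∑ j, |κ j| * Real.sqrt (w j) with hS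
  have hterm : ∀ i, 0 ≤ |κ i| * Real.sqrt (w i) := fun i => by positivity
  obtain ⟨i0, hi0⟩ : ∃ i, κ i ≠ 0 := by
    by_contra h; push_neg at h; exact hκ (funext h)
  have hSpos : 0 < S := by
    apply Finset.sum_pos' (fun i _ => hterm i)
    refine ⟨i0, Finset.mem_univ _, ?_⟩
    have h1 : 0 < |κ i0| := abs_pos.mpr hi0
    have h2 : 0 < Real.sqrt (w i0) := Real.sqrt_pos.mpr (hwpos i0)
    positivity
  set T : ℝ := ∑ j, w j with hT
  haveI : Nonempty (Fin n) := ⟨⟨0, hn⟩⟩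
  have hTpos : 0 < T := Finset.sum_pos (fun i _ => hwpos i) Finset.univ_nonempty
  have hK : 0 < ∑ i, κ i ^ 2 := by
    apply Finset.sum_pos' (fun i _ => sq_nonneg _)
    exact ⟨i0, Finset.mem_univ _, by positivity⟩
  -- Cauchy-Schwarz
  have hCS : S ^ 2 ≤ (∑ i, κ i ^ 2) * T := by
    have h := Finset.sum_mul_sq_le_sq_mul_sq Finset.univ (fun i => |κ i|) (fun i => Real.sqrt (w i))
    calc S ^ 2 = (∑ i, |κ i| * Real.sqrt (w i)) ^ 2 := by rw [hS]
      _ ≤ (∑ i, |κ i| ^ 2) * ∑ i, Real.sqrt (w i) ^ 2 := h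
      _ = (∑ i, κ i ^ 2) * T := by
          rw [hT]
          congr 1
          · exact Finset.sum_congr rfl fun i _ => sq_abs _
          · exact Finset.sum_congr rfl fun i _ => Real.sq_sqrt (hwpos i).le
  -- first inequality
  have hmain : c / T ≤ c * (∑ i, κ i ^ 2) / S ^ 2 := by
    rw [div_le_div_iff₀ hTpos (by positivity)]
    calc c * S ^ 2 ≤ c * ((∑ i, κ i ^ 2) * T) := by
          exact mul_le_mul_of_nonneg_left hCS hcpos.le
      _ = c * (∑ i, κ i ^ 2) * T := by ring
  have hfirst : c * (∑ i, κ i ^ 2) / S ^ 2 ≥ θstar := by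
    rw [hθstar]; exact hmain
  refine ⟨hfirst, ?_⟩
  -- second: θ pstar equals the first expression restricted to I
  have hden : (∑ i ∈ Finset.univ.filter (fun i => κ i ≠ 0),
      κ i ^ 2 * w i / pstar i) = S ^ 2 := by
    have : ∀ i ∈ Finset.univ.filter (fun i => κ i ≠ 0),
        κ i ^ 2 * w i / pstar i = (|κ i| * Real.sqrt (w i)) * S := by
      intro i hi
      rw [Finset.mem_filter] at hi
      have hki : κ i ≠ 0 := hi.2
      have hane : |κ i| ≠ 0 := abs_ne_zero.mpr hki
      have hsne : Real.sqrt (w i) ≠ 0 := ne_of_gt (Real.sqrt_pos.mpr (hwpos i))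
      rw [hpstar i]
      show κ i ^ 2 * w i / (|κ i| * Real.sqrt (w i) / S) = |κ i| * Real.sqrt (w i) * S
      rw [div_eq_iff (div_ne_zero (mul_ne_zero hane hsne) (ne_of_gt hSpos))]
      have hr : |κ i| * Real.sqrt (w i) * S * (|κ i| * Real.sqrt (w i) / S)
          = |κ i| ^ 2 * Real.sqrt (w i) ^ 2 * (S / S) := by ring
      rw [hr, div_self (ne_of_gt hSpos), sq_abs, Real.sq_sqrt (hwpos i).le, mul_one]
    rw [Finset.sum_congr rfl this, ← Finset.sum_mul]
    have hfill : (∑ i ∈ Finset.univ.filter (fun i => κ i ≠ 0),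
        |κ i| * Real.sqrt (w i)) = S := by
      rw [hS]
      apply Finset.sum_filter_of_ne
      intro i _ h
      contrapose! h
      simp [h]
    rw [hfill]; ring
  have hnum : (∑ i ∈ Finset.univ.filter (fun i => κ i ≠ 0), κ i ^ 2) = ∑ i, κ i ^ 2 := by
    apply Finset.sum_filter_of_ne
    intro i _ h
    contrapose! h
    simp [h]
  rw [hθ pstar]
  show c * _ / _ ≥ θstar
  rw [hnum]
  convert hfirst using 3
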